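/- Let Γ be a finite link-regular simple graph with maximal clique size d. Fix integers 1 ≤ m ≤ d and 0 ≤ k ≤ m, and fix an ordered (k+1)-clique (v₁, …, v_k, u) of Γ. Then the number of tuples (v_{k+1}, …, v_m) of distinct vertices, all distinct from v₁, …, v_k and from u, such that (v₁, …, v_m) is an ordered m-clique and none of v_{k+1}, …, v_m is adjacent to u, equals N_{m,k}; in particular this count is independent of the choice of the ordered (k+1)-clique (v₁, …, v_k, u). -/

import Mathlib

open scoped Classical

variable {V : Type*}

/-- The link of a finite set of vertices `σ`: vertices `v ∉ σ` with `σ ∪ {v}` a clique. -/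
noncomputable def lk [Fintype V] (G : SimpleGraph V) (σ : Finset V) : Finset V :=
  Set.Finite.toFinset (Set.toFinite {v : V | v ∉ σ ∧ G.IsClique (insert v (σ : Set V))})

/-- Link-regularity of a simple graph: cliques of the same size have links of the same size. -/
def LinkRegularS [Fintype V] (G : SimpleGraph V) : Prop :=
  ∀ σ₁ σ₂ : Finset V, G.IsClique (σ₁ : Set V) → G.IsClique (σ₂ : Set V) →
    σ₁.card = σ₂.card → (lk G σ₁).card = (lk G σ₂).card

/-- The numbers `N_{m,k}` of the paper, in terms of the link sizes `ℓ`. -/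
def Nmk (ℓ : ℕ → ℤ) (m k : ℕ) : ℤ :=
  if k = m then 1
  else if k + 1 = m then ℓ (m - 1) - ℓ m - 1
  else (∏ j ∈ Finset.Ioo k m, ℓ j) *
    ∑ j ∈ Finset.Icc k m, ((m - k).choose (j - k) : ℤ) * (-1) ^ (j - k) * ℓ j

theorem stmt12_aux_marker : True := trivial

section Aux
variable [Fintype V] (G : SimpleGraph V)

lemma mem_lk {σ : Finset V} {v : V} :
    v ∈ lk G σ ↔ v ∉ σ ∧ G.IsClique (insert v (σ : Set V)) := by
  simp [lk]

noncomputable def extT (G : SimpleGraph V) (σ : Finset V) (r : ℕ) (P : Fin r → V → Prop) :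
    Finset (Fin r → V) := by
  classical
  exact Finset.univ.filter (fun s => Function.Injective s ∧ (∀ i, s i ∉ σ) ∧
    G.IsClique ((σ : Set V) ∪ Set.range s) ∧ ∀ i, P i (s i))

lemma mem_extT {σ : Finset V} {r : ℕ} {P : Fin r → V → Prop} {s : Fin r → V} :
    s ∈ extT G σ r P ↔ Function.Injective s ∧ (∀ i, s i ∉ σ) ∧
      G.IsClique ((σ : Set V) ∪ Set.range s) ∧ ∀ i, P i (s i) := by
  simp [extT]

lemma extT_zero_card {σ : Finset V} {P : Fin 0 → V → Prop} (hσ : G.IsClique (σ : Set V)) :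
    (extT G σ 0 P).card = 1 := by
  have : extT G σ 0 P = {fun i => i.elim0} := by
    ext s
    simp only [mem_extT, Finset.mem_singleton]
    constructor
    · intro _; funext i; exact i.elim0
    · rintro rfl
      refine ⟨fun i => i.elim0, fun i => i.elim0, ?_, fun i => i.elim0⟩
      have : Set.range (fun i : Fin 0 => i.elim0 (α := V)) = ∅ := by
        simp [Set.range_eq_empty]
      rw [this, Set.union_empty]; exact hσ
  rw [this, Finset.card_singleton]

lemma extT_congr {σ : Finset V} {r : ℕ} {P Q : Fin r → V → Prop}
    (h : ∀ i v, P i v ↔ Q i v) : extT G σ r P = extT G σ r Q := by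
  ext s; simp only [mem_extT, h]

lemma peel {σ : Finset V} {r : ℕ} {P : Fin (r + 1) → V → Prop} :
    (extT G σ (r + 1) P).card =
      ∑ v ∈ Finset.filter (fun v => P 0 v) (lk G σ),
        (extT G (insert v σ) r (fun i w => P i.succ w)).card := by
  have key : extT G σ (r + 1) P =
      (Finset.filter (fun v => P 0 v) (lk G σ)).biUnion
        (fun v => (extT G (insert v σ) r (fun i w => P i.succ w)).image (Fin.cons v)) := by
    ext s
    simp only [Finset.mem_biUnion, Finset.mem_image, Finset.mem_filter, mem_lk, mem_extT]
    constructor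
    · rintro ⟨hinj, hnotσ, hcl, hP⟩
      have hrange : Set.range s = insert (s 0) (Set.range (Fin.tail s)) := by
        conv_lhs => rw [← Fin.cons_self_tail s]
        exact Fin.range_cons _ _
      have h1 : G.IsClique (insert (s 0) (σ : Set V)) := by
        apply hcl.subset
        intro x hx
        rcases hx with rfl | hx
        · exact Or.inr ⟨0, rfl⟩
        · exact Or.inl hx
      have h2 : ((insert (s 0) σ : Finset V) : Set V) ∪ Set.range (Fin.tail s) =
          (σ : Set V) ∪ Set.range s := by
        rw [hrange, Finset.coe_insert]
        ext x; simp only [Set.mem_union, Set.mem_insert_iff]; tauto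
      refine ⟨s 0, ⟨⟨hnotσ 0, h1⟩, hP 0⟩, Fin.tail s,
        ⟨?_, ?_, by rw [h2]; exact hcl, fun i => hP i.succ⟩, Fin.cons_self_tail s⟩
      · exact fun i j hij => Fin.succ_injective _ (hinj hij)
      · intro i
        simp only [Finset.mem_insert, not_or]
        exact ⟨fun h => (Fin.succ_ne_zero i) (hinj h), hnotσ i.succ⟩
    · rintro ⟨v, ⟨⟨hvσ, hvcl⟩, hPv⟩, tl, ⟨hinj, hnot, hcl, hP⟩, rfl⟩
      have hvr : v ∉ Set.range tl := by
        rintro ⟨i, rfl⟩; exact (hnot i) (Finset.mem_insert_self _ _)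
      have hrange : Set.range (Fin.cons v tl : Fin (r+1) → V) = insert v (Set.range tl) :=
        Fin.range_cons _ _
      have h2 : (↑σ : Set V) ∪ Set.range (Fin.cons v tl : Fin (r+1) → V) =
          (↑(insert v σ) : Set V) ∪ Set.range tl := by
        rw [hrange, Finset.coe_insert]
        ext x; simp only [Set.mem_union, Set.mem_insert_iff]; tauto
      refine ⟨Fin.cons_injective_iff.2 ⟨hvr, hinj⟩, ?_, by rw [h2]; exact hcl, ?_⟩
      · intro i
        refine Fin.cases ?_ ?_ i
        · simpa using hvσ
        · intro i'; simpa using fun hm => (hnot i') (Finset.mem_insert_of_mem hm)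
      · intro i
        refine Fin.cases ?_ ?_ i
        · simpa using hPv
        · intro i'; simpa using hP i'
  rw [key, Finset.card_biUnion]
  · refine Finset.sum_congr rfl fun v hv => ?_
    rw [Finset.card_image_of_injective]
    intro a b hab
    funext i
    have := congrFun hab i.succ
    simpa using this
  · intro v hv w hw hvw
    simp only [Finset.disjoint_left, Finset.mem_image]
    rintro s ⟨a, _, rfl⟩ ⟨b, _, hb⟩
    apply hvw
    have := congrFun hb 0
    simpa using this.symm
end Aux

lemma lk_insert_eq [Fintype V] {G : SimpleGraph V} {σ : Finset V} {u : V} (hu : u ∉ σ)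
    (hucl : G.IsClique (insert u (σ : Set V))) :
    lk G (insert u σ) = Finset.filter (fun v => G.Adj u v) (lk G σ) := by
  ext v
  simp only [mem_lk, Finset.mem_filter, Finset.mem_insert, Finset.coe_insert, not_or]
  constructor
  · rintro ⟨⟨hvu, hvσ⟩, hcl⟩
    refine ⟨⟨hvσ, hcl.subset ?_⟩, ?_⟩
    · intro x hx
      rcases hx with rfl | hx
      · exact Set.mem_insert _ _
      · exact Set.mem_insert_iff.2 (Or.inr (Set.mem_insert_iff.2 (Or.inr hx)))
    · exact (hcl (Set.mem_insert _ _) (Set.mem_insert_iff.2 (Or.inr (Set.mem_insert _ _))) hvu).symm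
  · rintro ⟨⟨hvσ, hcl⟩, hadj⟩
    have hvu : v ≠ u := hadj.ne'
    refine ⟨⟨hvu, hvσ⟩, ?_⟩
    intro x hx y hy hxy
    rcases hx with rfl | rfl | hx <;> rcases hy with rfl | rfl | hy
    · exact absurd rfl hxy
    · exact hadj.symm
    · exact hcl (Set.mem_insert _ _) (Set.mem_insert_iff.2 (Or.inr hy)) hxy
    · exact hadj
    · exact absurd rfl hxy
    · exact hucl (Set.mem_insert _ _) (Set.mem_insert_iff.2 (Or.inr hy)) hxy
    · exact hcl (Set.mem_insert_iff.2 (Or.inr hx)) (Set.mem_insert _ _) hxy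
    · exact (hucl (Set.mem_insert _ _) (Set.mem_insert_iff.2 (Or.inr hx)) hxy.symm).symm
    · exact hcl (Set.mem_insert_iff.2 (Or.inr hx)) (Set.mem_insert_iff.2 (Or.inr hy)) hxy


section Count
variable [Fintype V] {G : SimpleGraph V} {d : ℕ} {ℓ : ℕ → ℤ}
variable (hmax : ∀ σ : Finset V, G.IsClique (σ : Set V) → σ.card ≤ d)
  (hℓ0 : ℓ 0 = Fintype.card V)
  (hℓ : ∀ k, 1 ≤ k → k ≤ d → ∀ σ : Finset V, G.IsClique (σ : Set V) → σ.card = k →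
      ℓ k = ((lk G σ).card : ℤ))

include hmax hℓ0 hℓ

lemma lk_card {σ : Finset V} (hσ : G.IsClique (σ : Set V)) :
    ((lk G σ).card : ℤ) = ℓ σ.card := by
  rcases Nat.eq_zero_or_pos σ.card with h0 | h1
  · rw [Finset.card_eq_zero] at h0
    subst h0
    have : lk G (∅ : Finset V) = Finset.univ := by
      ext v; simp [mem_lk]
    rw [Finset.card_empty, hℓ0, this, Finset.card_univ]
  · rw [hℓ σ.card h1 (hmax σ hσ) σ hσ rfl]

/-- total count of ordered extensions -/
lemma total_count {r : ℕ} : ∀ {σ : Finset V}, G.IsClique (σ : Set V) →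
    ((extT G σ r (fun _ _ => True)).card : ℤ) =
      ∏ j ∈ Finset.Ico σ.card (σ.card + r), ℓ j := by
  induction r with
  | zero => intro σ hσ; rw [extT_zero_card G hσ]; simp
  | succ r ih =>
    intro σ hσ
    rw [peel]
    rw [Finset.filter_congr_decidable, Finset.filter_true_of_mem (fun _ _ => trivial)]
    have hsum : ∀ v ∈ lk G σ,
        ((extT G (insert v σ) r (fun _ _ => True)).card : ℤ) =
          ∏ j ∈ Finset.Ico (σ.card + 1) (σ.card + 1 + r), ℓ j := by
      intro v hv
      rw [mem_lk] at hv
      have hcl : G.IsClique ((insert v σ : Finset V) : Set V) := by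
        rw [Finset.coe_insert]; exact hv.2
      have := ih hcl
      rwa [Finset.card_insert_of_notMem hv.1] at this
    push_cast
    rw [Finset.sum_congr rfl hsum, Finset.sum_const, nsmul_eq_mul,
      lk_card hmax hℓ0 hℓ hσ,
      Finset.prod_eq_prod_Ico_succ_bot (by omega : σ.card < σ.card + (r + 1))]
    ring_nf

lemma countQ {u : V} : ∀ (a : ℕ) {r : ℕ}, a ≤ r → ∀ {σ : Finset V},
    G.IsClique (σ : Set V) → u ∉ σ → G.IsClique (insert u (σ : Set V)) →
    ((extT G σ r (fun i v => (i : ℕ) < a → G.Adj u v)).card : ℤ) =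
      (∏ j ∈ Finset.Ico (σ.card + 1) (σ.card + 1 + a), ℓ j) *
        ∏ j ∈ Finset.Ico (σ.card + a) (σ.card + r), ℓ j := by
  intro a
  induction a with
  | zero =>
    intro r _ σ hσ hu hucl
    have : extT G σ r (fun i v => (i : ℕ) < 0 → G.Adj u v) =
        extT G σ r (fun _ _ => True) := extT_congr G (by intro i v; simp)
    rw [this, total_count hmax hℓ0 hℓ hσ]
    simp
  | succ a ih =>
    rintro (_ | r) har σ hσ hu hucl
    · omega
    have har' : a ≤ r := by omega
    rw [peel]
    have hfil : Finset.filter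
        (fun v => ((0 : Fin (r+1)) : ℕ) < a + 1 → G.Adj u v) (lk G σ) =
        lk G (insert u σ) := by
      rw [lk_insert_eq hu hucl]
      ext v
      simp only [Finset.mem_filter]
      constructor
      · rintro ⟨h1, h2⟩; exact ⟨h1, h2 (by simp)⟩
      · rintro ⟨h1, h2⟩; exact ⟨h1, fun _ => h2⟩
    rw [Finset.filter_congr_decidable, hfil]
    have hsum : ∀ v ∈ lk G (insert u σ),
        ((extT G (insert v σ) r (fun i w => ((i.succ : Fin (r+1)) : ℕ) < a + 1 → G.Adj u w)).card : ℤ) =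
          (∏ j ∈ Finset.Ico (σ.card + 2) (σ.card + 2 + a), ℓ j) *
            ∏ j ∈ Finset.Ico (σ.card + 1 + a) (σ.card + 1 + r), ℓ j := by
      intro v hv
      rw [lk_insert_eq hu hucl, Finset.mem_filter, mem_lk] at hv
      obtain ⟨⟨hvσ, hvcl⟩, hadj⟩ := hv
      have hcongr : extT G (insert v σ) r
            (fun i w => ((i.succ : Fin (r+1)) : ℕ) < a + 1 → G.Adj u w) =
          extT G (insert v σ) r (fun i w => (i : ℕ) < a → G.Adj u w) := by
        refine extT_congr G fun i w => ?_
        have h : ((i.succ : Fin (r+1)) : ℕ) = (i : ℕ) + 1 := by simp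
        rw [h]
        constructor <;> intro h' hh <;> exact h' (by omega)
      rw [hcongr]
      have h1 : G.IsClique ((insert v σ : Finset V) : Set V) := by
        rw [Finset.coe_insert]; exact hvcl
      have h2 : u ∉ insert v σ := by
        simp only [Finset.mem_insert, not_or]
        exact ⟨hadj.ne, hu⟩
      have h3 : G.IsClique (insert u ((insert v σ : Finset V) : Set V)) := by
        rw [Finset.coe_insert, Set.insert_comm]
        intro x hx y hy hxy
        rcases hx with rfl | hx <;> rcases hy with rfl | hy
        · exact absurd rfl hxy
        · rcases hy with rfl | hy
          · exact hadj.symm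
          · exact hvcl (Set.mem_insert _ _) (Set.mem_insert_iff.2 (Or.inr hy)) hxy
        · rcases hx with rfl | hx
          · exact hadj
          · exact hvcl (Set.mem_insert_iff.2 (Or.inr hx)) (Set.mem_insert _ _) hxy
        · rcases hx with rfl | hx <;> rcases hy with rfl | hy
          · exact absurd rfl hxy
          · exact hucl (Set.mem_insert _ _) (Set.mem_insert_iff.2 (Or.inr hy)) hxy
          · exact (hucl (Set.mem_insert _ _) (Set.mem_insert_iff.2 (Or.inr hx)) hxy.symm).symm
          · exact hucl (Set.mem_insert_iff.2 (Or.inr hx)) (Set.mem_insert_iff.2 (Or.inr hy)) hxy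
      have := ih har' h1 h2 h3
      rwa [Finset.card_insert_of_notMem hvσ, show σ.card + 1 + 1 = σ.card + 2 by omega] at this
    push_cast
    rw [Finset.sum_congr rfl (fun v hv => by exact_mod_cast hsum v hv), Finset.sum_const,
      nsmul_eq_mul]
    have hl1 : ((lk G (insert u σ)).card : ℤ) = ℓ (σ.card + 1) := by
      have h1 : G.IsClique ((insert u σ : Finset V) : Set V) := by
        rw [Finset.coe_insert]; exact hucl
      have := lk_card hmax hℓ0 hℓ h1
      rwa [Finset.card_insert_of_notMem hu] at this
    rw [hl1]
    rw [Finset.prod_eq_prod_Ico_succ_bot (by omega : σ.card + 1 < σ.card + 1 + (a+1)) ℓ]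
    rw [show σ.card + 1 + 1 = σ.card + 2 by omega,
      show σ.card + 1 + (a+1) = σ.card + 2 + a by omega,
      show σ.card + (a+1) = σ.card + 1 + a by omega,
      show σ.card + (r+1) = σ.card + 1 + r by omega]
    ring
end Count

section PermIE
variable [Fintype V] {G : SimpleGraph V}

lemma extT_comp_card (σ : Finset V) (r : ℕ) (P : Fin r → V → Prop) (π : Equiv.Perm (Fin r)) :
    (extT G σ r (fun i v => P (π i) v)).card = (extT G σ r P).card := by
  apply Finset.card_bij' (fun s _ => s ∘ ⇑π.symm) (fun s _ => s ∘ ⇑π)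
  · intro s hs
    rw [mem_extT] at hs ⊢
    obtain ⟨hinj, hσ, hcl, hP⟩ := hs
    refine ⟨hinj.comp π.symm.injective, fun i => hσ _, ?_, fun i => ?_⟩
    · rwa [Set.range_comp, π.symm.surjective.range_eq, Set.image_univ]
    · have := hP (π.symm i)
      simpa using this
  · intro s hs
    rw [mem_extT] at hs ⊢
    obtain ⟨hinj, hσ, hcl, hP⟩ := hs
    refine ⟨hinj.comp π.injective, fun i => hσ _, ?_, fun i => hP (π i)⟩
    · rwa [Set.range_comp, π.surjective.range_eq, Set.image_univ]
  · intro s _; funext i; simp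
  · intro s _; funext i; simp

lemma exists_perm {α : Type*} [Fintype α] {S T : Finset α} (h : S.card = T.card) :
    ∃ π : Equiv.Perm α, ∀ i, π i ∈ T ↔ i ∈ S := by
  classical
  have hc : (Sᶜ : Finset α).card = (Tᶜ : Finset α).card := by
    rw [Finset.card_compl, Finset.card_compl, h]
  let e1 : {x // x ∈ S} ≃ {x // x ∈ T} := Finset.equivOfCardEq h
  let e2 : {x // ¬ x ∈ S} ≃ {x // ¬ x ∈ T} :=
    (Equiv.subtypeEquivRight (fun x => (Finset.mem_compl (s := S)).symm)).trans
      ((Finset.equivOfCardEq hc).trans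
        (Equiv.subtypeEquivRight (fun x => Finset.mem_compl (s := T))))
  refine ⟨(Equiv.sumCompl (· ∈ S)).symm.trans ((e1.sumCongr e2).trans
    (Equiv.sumCompl (· ∈ T))), fun i => ?_⟩
  by_cases hi : i ∈ S
  · simp only [Equiv.trans_apply, Equiv.sumCompl_symm_apply_of_pos hi,
      Equiv.sumCongr_apply, Sum.map_inl, Equiv.sumCompl_apply_inl]
    exact iff_of_true (e1 ⟨i, hi⟩).2 hi
  · simp only [Equiv.trans_apply, Equiv.sumCompl_symm_apply_of_neg hi,
      Equiv.sumCongr_apply, Sum.map_inr, Equiv.sumCompl_apply_inr]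
    exact iff_of_false (e2 ⟨i, hi⟩).2 hi

lemma card_initseg {r a : ℕ} (ha : a ≤ r) :
    (Finset.filter (fun i : Fin r => (i : ℕ) < a) Finset.univ).card = a := by
  have : Finset.filter (fun i : Fin r => (i : ℕ) < a) Finset.univ =
      (Finset.univ : Finset (Fin a)).map ⟨Fin.castLE ha, Fin.castLE_injective ha⟩ := by
    ext i
    simp only [Finset.mem_filter, Finset.mem_univ, true_and, Finset.mem_map,
      Function.Embedding.coeFn_mk]
    constructor
    · intro hi; exact ⟨⟨(i : ℕ), hi⟩, by ext; simp⟩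
    · rintro ⟨j, rfl⟩; simpa using j.2
  rw [this, Finset.card_map, Finset.card_univ, Fintype.card_fin]

/-- count with good positions `S` depends only on `S.card`. -/
lemma extT_S_card (σ : Finset V) (u : V) (r : ℕ) (S : Finset (Fin r)) :
    (extT G σ r (fun i v => i ∈ S → G.Adj u v)).card =
      (extT G σ r (fun i v => (i : ℕ) < S.card → G.Adj u v)).card := by
  have ha : S.card ≤ r := by
    simpa using Finset.card_le_card (Finset.subset_univ S)
  set T := Finset.filter (fun i : Fin r => (i : ℕ) < S.card) Finset.univ with hT
  have hTcard : S.card = T.card := (card_initseg ha).symm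
  obtain ⟨π, hπ⟩ := exists_perm hTcard.symm
  have h1 : (extT G σ r (fun i v => π i ∈ S → G.Adj u v)).card =
      (extT G σ r (fun i v => i ∈ S → G.Adj u v)).card :=
    extT_comp_card σ r (fun j v => j ∈ S → G.Adj u v) π
  rw [← h1]
  congr 1
  apply extT_congr
  intro i v
  rw [show (π i ∈ S) ↔ i ∈ T from hπ i, hT, Finset.mem_filter]
  simp

/-- inclusion–exclusion -/
lemma inclexcl (σ : Finset V) (u : V) (r : ℕ) :
    ((extT G σ r (fun _ v => ¬ G.Adj u v)).card : ℤ) =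
      ∑ S ∈ (Finset.univ : Finset (Fin r)).powerset,
        (-1) ^ S.card * ((extT G σ r (fun i v => i ∈ S → G.Adj u v)).card : ℤ) := by
  have hfilter : ∀ (P : Fin r → V → Prop),
      extT (V := V) G σ r P
        = (extT G σ r (fun _ _ => True)).filter (fun s => ∀ i, P i (s i)) := by
    intro P
    ext s
    simp only [mem_extT, Finset.mem_filter]
    tauto
  rw [hfilter, Finset.card_filter]
  push_cast
  have key : ∀ s ∈ extT G σ r (fun _ _ => True),
      (if ∀ i, ¬ G.Adj u (s i) then (1 : ℤ) else 0) =
        ∑ S ∈ (Finset.univ : Finset (Fin r)).powerset,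
          (-1) ^ S.card * ∏ i ∈ S, (if G.Adj u (s i) then (1 : ℤ) else 0) := by
    intro s _
    have expand : ∏ i ∈ (Finset.univ : Finset (Fin r)),
        ((1 : ℤ) - (if G.Adj u (s i) then (1 : ℤ) else 0)) =
        ∑ S ∈ (Finset.univ : Finset (Fin r)).powerset,
          (-1) ^ S.card * ∏ i ∈ S, (if G.Adj u (s i) then (1 : ℤ) else 0) := by
      have h0 : ∀ i, (1 : ℤ) - (if G.Adj u (s i) then (1 : ℤ) else 0) =
          (-(if G.Adj u (s i) then (1 : ℤ) else 0)) + 1 := fun i => by ring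
      rw [Finset.prod_congr rfl (fun i _ => h0 i), Finset.prod_add]
      refine Finset.sum_congr rfl fun S _ => ?_
      rw [Finset.prod_const_one, mul_one]
      calc ∏ i ∈ S, -(if G.Adj u (s i) then (1:ℤ) else 0)
          = ∏ i ∈ S, (-1) * (if G.Adj u (s i) then (1:ℤ) else 0) :=
            Finset.prod_congr rfl fun i _ => by ring
        _ = (-1) ^ S.card * ∏ i ∈ S, (if G.Adj u (s i) then (1:ℤ) else 0) := by
            rw [Finset.prod_mul_distrib, Finset.prod_const]
    rw [← expand]
    by_cases h : ∀ i, ¬ G.Adj u (s i)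
    · rw [if_pos h]
      rw [Finset.prod_congr rfl (fun i (_ : i ∈ Finset.univ) =>
        show (1:ℤ) - (if G.Adj u (s i) then (1:ℤ) else 0) = 1 by rw [if_neg (h i)]; ring),
        Finset.prod_const_one]
    · rw [if_neg h]
      push_neg at h
      obtain ⟨i, hi⟩ := h
      refine (Finset.prod_eq_zero (Finset.mem_univ i) ?_).symm
      rw [if_pos hi]; ring
  rw [Finset.sum_congr rfl key, Finset.sum_comm]
  refine Finset.sum_congr rfl fun S _ => ?_
  rw [← Finset.mul_sum]
  congr 1
  have h2 : ∀ s ∈ extT G σ r (fun _ _ => True),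
      (∏ i ∈ S, (if G.Adj u (s i) then (1 : ℤ) else 0)) =
        (if ∀ i ∈ S, G.Adj u (s i) then (1:ℤ) else 0) := by
    intro s _
    by_cases h : ∀ i ∈ S, G.Adj u (s i)
    · rw [if_pos h]
      exact Finset.prod_eq_one (fun i hi => if_pos (h i hi))
    · rw [if_neg h]
      push_neg at h
      obtain ⟨i, hiS, hi⟩ := h
      exact Finset.prod_eq_zero hiS (if_neg hi)
  rw [Finset.sum_congr rfl h2]
  rw [hfilter (fun i v => i ∈ S → G.Adj u v), Finset.card_filter]
  push_cast
  rfl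
end PermIE

theorem stmt12 [Fintype V] (G : SimpleGraph V) (d : ℕ)
    (hLR : LinkRegularS G)
    (hmax : ∀ σ : Finset V, G.IsClique (σ : Set V) → σ.card ≤ d)
    (hmax' : ∃ σ : Finset V, G.IsClique (σ : Set V) ∧ σ.card = d)
    (ℓ : ℕ → ℤ) (hℓ0 : ℓ 0 = Fintype.card V)
    (hℓ : ∀ k, 1 ≤ k → k ≤ d → ∀ σ : Finset V, G.IsClique (σ : Set V) → σ.card = k →
      ℓ k = ((lk G σ).card : ℤ))
    (m k : ℕ) (hm1 : 1 ≤ m) (hmd : m ≤ d) (hk : k ≤ m)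
    (t : Fin k → V) (u : V) (ht : Function.Injective t)
    (hu : u ∉ Set.range t) (hclique : G.IsClique (insert u (Set.range t))) :
    (Set.ncard {s : Fin (m - k) → V |
        Function.Injective s ∧ (∀ i j, s i ≠ t j) ∧ (∀ i, s i ≠ u) ∧
        G.IsClique (Set.range t ∪ Set.range s) ∧ ∀ i, ¬ G.Adj u (s i)} : ℤ) =
      Nmk ℓ m k := by
  classical
  generalize hn : m - k = r
  have hm2 : m = k + r := by omega
  subst hm2
  set σ : Finset V := Finset.univ.image t with hσdef
  have hσcoe : (σ : Set V) = Set.range t := by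
    rw [hσdef, Finset.coe_image, Finset.coe_univ, Set.image_univ]
  have hσcard : σ.card = k := by
    rw [hσdef, Finset.card_image_of_injective _ ht, Finset.card_univ, Fintype.card_fin]
  have hσcl : G.IsClique (σ : Set V) := by
    rw [hσcoe]; exact hclique.subset (Set.subset_insert _ _)
  have huσ : u ∉ σ := by
    rw [← Finset.mem_coe, hσcoe]; exact hu
  have hucl : G.IsClique (insert u (σ : Set V)) := by rw [hσcoe]; exact hclique
  have hset : {s : Fin r → V |
        Function.Injective s ∧ (∀ i j, s i ≠ t j) ∧ (∀ i, s i ≠ u) ∧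
        G.IsClique (Set.range t ∪ Set.range s) ∧ ∀ i, ¬ G.Adj u (s i)} =
      ↑(extT G σ r (fun _ v => v ≠ u ∧ ¬ G.Adj u v)) := by
    ext s
    simp only [Set.mem_setOf_eq, Finset.mem_coe, mem_extT, ← hσcoe]
    have hmem : ∀ x, x ∈ σ ↔ ∃ j, t j = x := by
      intro x; rw [hσdef]; simp
    constructor
    · rintro ⟨h1, h2, h3, h4, h5⟩
      refine ⟨h1, fun i => ?_, h4, fun i => ⟨h3 i, h5 i⟩⟩
      rw [hmem]; rintro ⟨j, hj⟩; exact h2 i j hj.symm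
    · rintro ⟨h1, h2, h3, h4⟩
      exact ⟨h1, fun i j hj => (h2 i) ((hmem (s i)).2 ⟨j, hj.symm⟩),
        fun i => (h4 i).1, h3, fun i => (h4 i).2⟩
  rw [hset, Set.ncard_coe_finset]
  rcases r with _ | r
  · -- r = 0
    rw [extT_zero_card G hσcl]
    rw [Nmk, if_pos (by omega : k = k + 0)]
    norm_num
  rcases r with _ | r
  · -- r = 1
    rw [peel]
    have hone : ∀ v ∈ Finset.filter
        (fun v => v ≠ u ∧ ¬ G.Adj u v) (lk G σ),
        (extT G (insert v σ) 0 (fun i w => (fun _ v => v ≠ u ∧ ¬ G.Adj u v) i.succ w)).card = 1 := by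
      intro v hv
      rw [Finset.mem_filter, mem_lk] at hv
      refine extT_zero_card G ?_
      rw [Finset.coe_insert]; exact hv.1.2
    rw [Finset.filter_congr_decidable, Finset.sum_congr rfl hone, Finset.sum_const, smul_eq_mul,
      mul_one]
    have hsplit := Finset.card_filter_add_card_filter_not
      (s := lk G σ) (fun v => v ≠ u ∧ ¬ G.Adj u v)
    have hneg : Finset.filter (fun v => ¬ (v ≠ u ∧ ¬ G.Adj u v)) (lk G σ) =
        insert u (lk G (insert u σ)) := by
      rw [lk_insert_eq huσ hucl]
      ext v
      simp only [Finset.mem_filter, Finset.mem_insert, not_and_or, not_not, ne_eq]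
      constructor
      · rintro ⟨hv, h | h⟩
        · left; simpa using h
        · right; exact ⟨hv, h⟩
      · rintro (rfl | ⟨hv, h⟩)
        · exact ⟨mem_lk G |>.2 ⟨huσ, hucl⟩, Or.inl (by simp)⟩
        · exact ⟨hv, Or.inr h⟩
    have hucard : u ∉ lk G (insert u σ) := by
      rw [mem_lk]
      simp
    have hl0 : ((lk G σ).card : ℤ) = ℓ k := by
      rw [lk_card hmax hℓ0 hℓ hσcl, hσcard]
    have hl1 : ((lk G (insert u σ)).card : ℤ) = ℓ (k + 1) := by
      have h1 : G.IsClique ((insert u σ : Finset V) : Set V) := by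
        rw [Finset.coe_insert]; exact hucl
      rw [lk_card hmax hℓ0 hℓ h1, Finset.card_insert_of_notMem huσ, hσcard]
    rw [hneg, Finset.card_insert_of_notMem hucard] at hsplit
    rw [Nmk, if_neg (by omega : ¬ k = k + 1), if_pos rfl]
    have hcast : ((Finset.filter (fun v => v ≠ u ∧ ¬ G.Adj u v) (lk G σ)).card : ℤ) =
        ((lk G σ).card : ℤ) - ((lk G (insert u σ)).card : ℤ) - 1 := by omega
    rw [hcast, hl0, hl1]
    simp only [show k + 1 - 1 = k from rfl]
  · -- r ≥ 2
    have hP : extT G σ (r+2) (fun _ v => v ≠ u ∧ ¬ G.Adj u v) =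
        extT G σ (r+2) (fun _ v => ¬ G.Adj u v) := by
      ext s
      simp only [mem_extT]
      constructor
      · rintro ⟨h1, h2, h3, h4⟩
        exact ⟨h1, h2, h3, fun i => (h4 i).2⟩
      · rintro ⟨h1, h2, h3, h4⟩
        refine ⟨h1, h2, h3, fun i => ⟨?_, h4 i⟩⟩
        intro hiu
        obtain ⟨j, hij⟩ : ∃ j : Fin (r+2), j ≠ i := by
          by_cases h : i = 0
          · exact ⟨1, by rw [h]; exact one_ne_zero⟩
          · exact ⟨0, fun hh => h (hh.symm)⟩
        have hne : s j ≠ s i := fun hh => hij (h1 hh)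
        have hadj : G.Adj (s j) (s i) :=
          h3 (Or.inr ⟨j, rfl⟩) (Or.inr ⟨i, rfl⟩) hne
        rw [hiu] at hadj
        exact h4 j hadj.symm
    rw [hP, inclexcl σ u (r+2)]
    have hterm : ∀ S ∈ (Finset.univ : Finset (Fin (r+2))).powerset,
        (-1 : ℤ) ^ S.card * ((extT G σ (r+2) (fun i v => i ∈ S → G.Adj u v)).card : ℤ) =
          (-1 : ℤ) ^ S.card * ((∏ j ∈ Finset.Ico (k + 1) (k + 1 + S.card), ℓ j) *
            ∏ j ∈ Finset.Ico (k + S.card) (k + (r+2)), ℓ j) := by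
      intro S _
      congr 1
      rw [extT_S_card σ u (r+2) S]
      have := countQ hmax hℓ0 hℓ (u := u) S.card
        (by simpa using Finset.card_le_card (Finset.subset_univ S)) hσcl huσ hucl
      rw [hσcard] at this
      exact this
    rw [Finset.sum_congr rfl hterm, Finset.sum_powerset]
    have hinner : ∀ j ∈ Finset.range ((Finset.univ : Finset (Fin (r+2))).card + 1),
        (∑ S ∈ Finset.powersetCard j (Finset.univ : Finset (Fin (r+2))),
          (-1 : ℤ) ^ S.card * ((∏ i ∈ Finset.Ico (k + 1) (k + 1 + S.card), ℓ i) *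
            ∏ i ∈ Finset.Ico (k + S.card) (k + (r+2)), ℓ i)) =
        ((r+2).choose j : ℤ) * ((-1 : ℤ) ^ j * ((∏ i ∈ Finset.Ico (k + 1) (k + 1 + j), ℓ i) *
            ∏ i ∈ Finset.Ico (k + j) (k + (r+2)), ℓ i)) := by
      intro j _
      have hc : ∀ S ∈ Finset.powersetCard j (Finset.univ : Finset (Fin (r+2))), S.card = j :=
        fun S hS => (Finset.mem_powersetCard.1 hS).2
      rw [Finset.sum_congr rfl (fun S hS => by rw [hc S hS]), Finset.sum_const,
        Finset.card_powersetCard, Finset.card_univ, Fintype.card_fin, nsmul_eq_mul]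
      try push_cast
      try ring
    rw [Finset.sum_congr rfl hinner, Finset.card_univ, Fintype.card_fin]
    -- now pure algebra
    have huniform : ∀ j ∈ Finset.range (r + 2 + 1),
        ((r+2).choose j : ℤ) * ((-1 : ℤ) ^ j * ((∏ i ∈ Finset.Ico (k + 1) (k + 1 + j), ℓ i) *
            ∏ i ∈ Finset.Ico (k + j) (k + (r+2)), ℓ i)) =
        ((r+2).choose j : ℤ) * (-1 : ℤ) ^ j * ℓ (k + j) * ∏ i ∈ Finset.Ico (k+1) (k + (r+2)), ℓ i := by
      intro j hj
      rw [Finset.mem_range] at hj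
      rcases Nat.lt_or_ge j (r+2) with hlt | hge
      · rw [Finset.prod_eq_prod_Ico_succ_bot (by omega : k + j < k + (r+2)) ℓ]
        rw [← Finset.prod_Ico_consecutive ℓ (by omega : k+1 ≤ k+j+1) (by omega : k+j+1 ≤ k+(r+2))]
        rw [show k + 1 + j = k + j + 1 by omega]
        ring
      · have hj2 : j = r + 2 := by omega
        subst hj2
        rw [show k + 1 + (r+2) = (k + (r+2)) + 1 by omega,
          Finset.prod_Ico_succ_top (by omega : k + 1 ≤ k + (r+2)) ℓ,
          Finset.Ico_self, Finset.prod_empty]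
        ring
    rw [Finset.sum_congr rfl huniform]
    rw [Nmk, if_neg (by omega : ¬ k = k + (r+2)), if_neg (by omega : ¬ k + 1 = k + (r+2))]
    have hIoo : Finset.Ioo k (k + (r+2)) = Finset.Ico (k+1) (k + (r+2)) :=
      (Finset.Ico_add_one_left_eq_Ioo _ _).symm
    rw [hIoo]
    have hIcc : Finset.Icc k (k + (r+2)) = Finset.Ico k (k + (r+2) + 1) := by
      rw [Finset.Ico_add_one_right_eq_Icc]
    rw [hIcc, Finset.sum_Ico_eq_sum_range]
    rw [show k + (r+2) + 1 - k = r + 2 + 1 by omega]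
    simp only [Nat.add_sub_cancel_left, show k + (r+2) - k = r + 2 from by omega]
    rw [Finset.mul_sum]
    refine Finset.sum_congr rfl fun j _ => by ring
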